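/- Let α > γ > 0 and let C_A, C_B > 0 be given. The unique solution Y_A > 0 of the equation Y_A = ((α − γ·Y_A)·C_A) / ((α − γ/Y_A)·C_B) with Y_B = 1/Y_A is Y_A = (α·(C_A/C_B) + γ)/(α + γ·(C_A/C_B)). -/
import Mathlib


/-- for `α > γ > 0` and `C_A, C_B > 0`, the unique positive
solution of `Y_A = ((α − γY_A)C_A)/((α − γ/Y_A)C_B)` is
`Y_A = (α(C_A/C_B) + γ)/(α + γ(C_A/C_B))`. -/
theorem stmt_5 (α γ CA CB : ℝ) (hγ : 0 < γ) (hαγ : γ < α)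
    (hCA : 0 < CA) (hCB : 0 < CB) :
    ∀ Y : ℝ, 0 < Y →
      (Y = ((α - γ * Y) * CA) / ((α - γ / Y) * CB) ↔
        Y = (α * (CA / CB) + γ) / (α + γ * (CA / CB))) := by
  intro Y hY
  have hα : 0 < α := lt_trans hγ hαγ
  have hY0 : Y ≠ 0 := ne_of_gt hY
  have hCB0 : CB ≠ 0 := ne_of_gt hCB
  have hden2 : 0 < α + γ * (CA / CB) :=
    add_pos hα (mul_pos hγ (div_pos hCA hCB))
  have hden3 : 0 < α * CB + γ * CA := add_pos (mul_pos hα hCB) (mul_pos hγ hCA)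
  constructor
  · intro h
    have hd : (α - γ / Y) * CB ≠ 0 := by
      intro h0
      rw [h0, div_zero] at h
      exact hY0 h
    rw [eq_div_iff hd] at h
    rw [eq_div_iff (ne_of_gt hden2)]
    field_simp at h ⊢
    nlinarith [h]
  · intro h
    have hval : Y * (α * CB + γ * CA) = α * CA + γ * CB := by
      rw [h]
      rw [div_mul_eq_mul_div, div_eq_iff (ne_of_gt hden2)]
      field_simp
    have h2 : (α * Y - γ) * (α * CB + γ * CA) = CA * (α ^ 2 - γ ^ 2) := by
      linear_combination α * hval
    have hαY : γ < α * Y := by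
      by_contra hc
      push_neg at hc
      have hsq : 0 < α ^ 2 - γ ^ 2 := by nlinarith
      nlinarith [h2, mul_pos hCA hsq,
        mul_nonneg (by linarith : (0:ℝ) ≤ γ - α * Y) (le_of_lt hden3)]
    have hd1 : α - γ / Y ≠ 0 := by
      have : γ / Y < α := (div_lt_iff₀ hY).mpr (by linarith [mul_comm α Y])
      linarith
    rw [eq_div_iff (mul_ne_zero hd1 hCB0)]
    field_simp
    nlinarith [hval]
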